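/- For a Lie group G, the affine group Aff(G) = G ⋊ Aut(G), acting on G by g ↦ a·φ(g), is precisely the normalizer of the left-translation action of G inside the group Diff(G) of diffeomorphisms of G. -/

import Mathlib

open Manifold

/-- For a Lie group `G`, a diffeomorphism `f` of `G` normalizes the
subgroup of left translations inside the group of diffeomorphisms of `G` if and only if
it is an affine transformation, i.e. of the form `x ↦ a * φ x` for some `a ∈ G` and some
Lie group automorphism `φ` of `G`.  In other words, `Aff(G) = G ⋊ Aut(G)` is precisely
the normalizer of the left-translation action of `G` in `Diff(G)`. -/
theorem stmt_0
    {E : Type*} [NormedAddCommGroup E] [NormedSpace ℝ E]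
    {H : Type*} [TopologicalSpace H] (I : ModelWithCorners ℝ E H)
    {G : Type*} [TopologicalSpace G] [ChartedSpace H G] [Group G] [LieGroup I (⊤ : ℕ∞) G]
    (f : Diffeomorph I I G G (⊤ : ℕ∞)) :
    ((∀ g : G, ∃ g' : G, ∀ x : G, f (g * f.symm x) = g' * x) ∧
      (∀ g : G, ∃ g' : G, ∀ x : G, f.symm (g * f x) = g' * x)) ↔
    ∃ (a : G) (φ : G ≃* G), ContMDiff I I (⊤ : ℕ∞) ⇑φ ∧ ContMDiff I I (⊤ : ℕ∞) ⇑φ.symm ∧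
      ∀ x : G, f x = a * φ x := by
  constructor
  · rintro ⟨h1, -⟩
    set a : G := f 1 with ha
    have key : ∀ g y : G, f (g * y) = f g * a⁻¹ * f y := by
      intro g y
      obtain ⟨g', hg'⟩ := h1 g
      have h1' : f g = g' * a := by
        have := hg' (f 1)
        simpa using this
      have h2' : f (g * y) = g' * f y := by
        have := hg' (f y)
        simpa using this
      rw [h2', h1']
      group
    refine ⟨a, ⟨⟨fun x => a⁻¹ * f x, fun y => f.symm (a * y), ?_, ?_⟩, ?_⟩, ?_, ?_, ?_⟩
    · intro x; simp
    · intro y; simp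
    · intro x y
      simp only [key x y]
      group
    · exact contMDiff_mul_left.comp f.contMDiff
    · exact f.symm.contMDiff.comp contMDiff_mul_left
    · intro x; simp
  · rintro ⟨a, φ, -, -, hf⟩
    have hsymm : ∀ x : G, f.symm x = φ.symm (a⁻¹ * x) := by
      intro x
      apply f.toEquiv.injective
      have : f (φ.symm (a⁻¹ * x)) = x := by
        rw [hf]; simp
      calc f.toEquiv (f.symm x) = x := f.apply_symm_apply x
        _ = f.toEquiv (φ.symm (a⁻¹ * x)) := this.symm
    constructor
    · intro g
      refine ⟨a * φ g * a⁻¹, fun x => ?_⟩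
      rw [hf, hsymm, map_mul, MulEquiv.apply_symm_apply]
      group
    · intro g
      refine ⟨φ.symm (a⁻¹ * g * a), fun x => ?_⟩
      rw [hsymm, hf]
      have : a⁻¹ * (g * (a * φ x)) = (a⁻¹ * g * a) * φ x := by group
      rw [this, map_mul, MulEquiv.symm_apply_apply]
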